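/- Let q be a prime power and E ⊆ 𝔽_q² with |E| ≥ Cq^{3/2} for a sufficiently large absolute constant C. Then the set of directions spanned by E, i.e. {u − v : u,v ∈ E, u ≠ v} considered up to nonzero scalar multiples, has size at least cq for an absolute constant c > 0. -/

import Mathlib

open scoped Classical

theorem stmt_8 :
    ∃ C c : ℝ, 0 < C ∧ 0 < c ∧
      ∀ (Fq : Type) [Field Fq] [Fintype Fq], ∀ (E : Finset (Fin 2 → Fq)),
        (C * (Fintype.card Fq : ℝ) ^ ((3 : ℝ) / 2) ≤ (E.card : ℝ)) →
        c * (Fintype.card Fq : ℝ) ≤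
          ((((E ×ˢ E).filter (fun p => p.1 ≠ p.2)).image
            (fun p => Submodule.span Fq {p.1 - p.2})).card : ℝ) := by
  refine ⟨1, 1, one_pos, one_pos, ?_⟩
  intro Fq _ _ E hE
  rw [one_mul] at hE ⊢
  set q := Fintype.card Fq with hq
  have hq2 : 2 ≤ q := Fintype.one_lt_card
  -- |E| > q
  have hqE : q < E.card := by
    have h1 : (q : ℝ) < (q : ℝ) ^ ((3 : ℝ) / 2) := by
      nth_rewrite 1 [← Real.rpow_one (q : ℝ)]
      refine Real.rpow_lt_rpow_of_exponent_lt (by exact_mod_cast hq2) (by norm_num)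
    exact_mod_cast h1.trans_le hE
  -- each slope direction is attained
  have key : ∀ a : Fq, Submodule.span Fq {![(1 : Fq), a]} ∈
      ((E ×ˢ E).filter (fun p => p.1 ≠ p.2)).image
        (fun p => Submodule.span Fq {p.1 - p.2}) := by
    intro a
    obtain ⟨u, hu, v, hv, huv, heq⟩ :=
      Finset.exists_ne_map_eq_of_card_lt_of_maps_to (t := (Finset.univ : Finset Fq))
        (f := fun x : Fin 2 → Fq => x 1 - a * x 0)
        (by simpa using hqE) (fun x _ => Finset.mem_univ _)

    have hw0 : u 0 - v 0 ≠ 0 := by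
      intro h0
      apply huv
      have h1 : u 1 - v 1 = 0 := by
        have h2 : u 0 - v 0 = 0 := h0
        linear_combination heq + a * h2
      funext i
      fin_cases i
      · exact sub_eq_zero.mp h0
      · exact sub_eq_zero.mp h1
    have hwdef : u - v = (u 0 - v 0) • ![(1 : Fq), a] := by
      funext i
      fin_cases i
      · simp
      · show u 1 - v 1 = (u 0 - v 0) • (![(1 : Fq), a]) 1
        simp only [smul_eq_mul, Matrix.cons_val_one, Matrix.head_cons, Matrix.cons_val_zero]
        linear_combination heq
    refine Finset.mem_image.mpr ⟨(u, v), ?_, ?_⟩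
    · simp [Finset.mem_filter, Finset.mem_product, hu, hv, huv]
    · rw [hwdef]
      exact Submodule.span_singleton_smul_eq (IsUnit.mk0 _ hw0) _
  -- the map a ↦ span{(1,a)} is injective
  have hinj : ∀ a ∈ (Finset.univ : Finset Fq), ∀ b ∈ (Finset.univ : Finset Fq),
      Submodule.span Fq {![(1 : Fq), a]} = Submodule.span Fq {![(1 : Fq), b]} → a = b := by
    intro a _ b _ h
    have hmem : ![(1 : Fq), b] ∈ Submodule.span Fq {![(1 : Fq), a]} := by
      rw [h]; exact Submodule.mem_span_singleton_self _
    obtain ⟨t, ht⟩ := Submodule.mem_span_singleton.mp hmem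
    have h0 : t * 1 = 1 := congrFun ht 0
    have h1 : t * a = b := congrFun ht 1
    rw [mul_one] at h0
    rw [h0, one_mul] at h1
    exact h1
  have hcard := Finset.card_le_card_of_injOn
      (f := fun a : Fq => Submodule.span Fq {![(1 : Fq), a]})
      (fun a _ => key a) hinj
  simp only [Finset.card_univ] at hcard
  exact_mod_cast hcard
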